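/- Let n be a natural number, G a group, and ρ : G →* (V ≃ₗ[ℂ] V) a linear action of G on V = (Fin n → ℂ). Let v₀ ∈ V, let Ω = {ρ(g)v₀ : g ∈ G} be the orbit of v₀, and assume t·v ∈ Ω for every v ∈ Ω and every nonzero t ∈ ℂ. Let p, q ∈ MvPolynomial (Fin n) ℂ with q(v) ≠ 0 for all v ∈ Ω, and let Φ : G → ℂ satisfy p(ρ(g)v)/q(ρ(g)v) − p(v)/q(v) = Φ(g) for all g ∈ G and v ∈ Ω. Then the rational function p/q is homogeneous of degree 0 on Ω: p(t·v)/q(t·v) = p(v)/q(v) for every nonzero t ∈ ℂ and every v ∈ Ω. -/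

import Mathlib

open MvPolynomial

/-- An additive relative invariant `p/q` is homogeneous of degree `0` on the orbit `Ω`. -/
theorem additive_relative_invariant_homogeneous_degree_zero
    (n : ℕ) {G : Type*} [Group G]
    (ρ : G →* ((Fin n → ℂ) ≃ₗ[ℂ] (Fin n → ℂ)))
    (v₀ : Fin n → ℂ)
    (Ω : Set (Fin n → ℂ)) (hΩ : Ω = {v | ∃ g : G, ρ g v₀ = v})
    (hscal : ∀ v ∈ Ω, ∀ t : ℂ, t ≠ 0 → t • v ∈ Ω)
    (p q : MvPolynomial (Fin n) ℂ)
    (hq : ∀ v ∈ Ω, eval v q ≠ 0)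
    (Φ : G → ℂ)
    (hΦ : ∀ g : G, ∀ v ∈ Ω,
      eval (ρ g v) p / eval (ρ g v) q - eval v p / eval v q = Φ g) :
    ∀ t : ℂ, t ≠ 0 → ∀ v ∈ Ω,
      eval (t • v) p / eval (t • v) q = eval v p / eval v q := by
  have hv₀ : v₀ ∈ Ω := by rw [hΩ]; exact ⟨1, by simp⟩
  -- Step 1: the difference quotient is independent of the point of the orbit.
  have key : ∀ t : ℂ, t ≠ 0 → ∀ v ∈ Ω,
      eval (t • v) p / eval (t • v) q - eval v p / eval v q
        = eval (t • v₀) p / eval (t • v₀) q - eval v₀ p / eval v₀ q := by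
    intro t ht v hv
    obtain ⟨g, hg⟩ : ∃ g : G, ρ g v₀ = v := by rw [hΩ] at hv; exact hv
    have h1 := hΦ g (t • v₀) (hscal v₀ hv₀ t ht)
    have h2 := hΦ g v₀ hv₀
    have hsm : ρ g (t • v₀) = t • v := by
      rw [map_smul, hg]
    rw [hsm] at h1
    rw [hg] at h2
    linear_combination h1 - h2
  -- The one-variable polynomials P, Q.
  set e : MvPolynomial (Fin n) ℂ →+* Polynomial ℂ :=
    eval₂Hom Polynomial.C (fun i => Polynomial.C (v₀ i) * Polynomial.X) with he
  have heval : ∀ (f : MvPolynomial (Fin n) ℂ) (t : ℂ),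
      Polynomial.eval t (e f) = eval (t • v₀) f := by
    intro f t
    induction f using MvPolynomial.induction_on with
    | C a => simp [he]
    | add f g hf hg => simp only [map_add, Polynomial.eval_add, hf, hg]
    | mul_X f i hf =>
        simp only [map_mul, Polynomial.eval_mul, hf, he, eval₂Hom_X',
          Polynomial.eval_mul, Polynomial.eval_C, Polynomial.eval_X, map_mul, eval_X,
          Pi.smul_apply, smul_eq_mul]
        rw [← he, hf]
        ring
  set P : Polynomial ℂ := e p with hP
  set Q : Polynomial ℂ := e q with hQ
  have hQne : ∀ t : ℂ, t ≠ 0 → Polynomial.eval t Q ≠ 0 := by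
    intro t ht
    rw [heval]
    exact hq _ (hscal v₀ hv₀ t ht)
  have hQ1 : Polynomial.eval 1 Q ≠ 0 := hQne 1 one_ne_zero
  set A : Polynomial ℂ := P * Polynomial.C (Polynomial.eval 1 Q)
      - Polynomial.C (Polynomial.eval 1 P) * Q with hA
  -- Multiplicativity gives a polynomial identity.
  have hsq : ∀ t : ℂ, t ≠ 0 →
      Polynomial.eval (t ^ 2) A * Polynomial.eval t Q
        = 2 * (Polynomial.eval t A * Polynomial.eval (t ^ 2) Q) := by
    intro t ht
    have ht2 : (t ^ 2 : ℂ) ≠ 0 := pow_ne_zero 2 ht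
    have h1 := key t ht (t • v₀) (hscal v₀ hv₀ t ht)
    have h2 : (t : ℂ) • t • v₀ = (t ^ 2) • v₀ := by
      rw [smul_smul]; ring_nf
    rw [h2] at h1
    have e1 : eval ((t ^ 2) • v₀) p = Polynomial.eval (t ^ 2) P := (heval p _).symm
    have e2 : eval ((t ^ 2) • v₀) q = Polynomial.eval (t ^ 2) Q := (heval q _).symm
    have e3 : eval (t • v₀) p = Polynomial.eval t P := (heval p t).symm
    have e4 : eval (t • v₀) q = Polynomial.eval t Q := (heval q t).symm
    have e5 : eval v₀ p = Polynomial.eval 1 P := by rw [heval p 1, one_smul]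
    have e6 : eval v₀ q = Polynomial.eval 1 Q := by rw [heval q 1, one_smul]
    rw [e1, e2, e3, e4, e5, e6] at h1
    have hq2 : Polynomial.eval (t ^ 2) Q ≠ 0 := hQne _ ht2
    have hqt : Polynomial.eval t Q ≠ 0 := hQne t ht
    simp only [hA, Polynomial.eval_sub, Polynomial.eval_mul, Polynomial.eval_C]
    field_simp at h1
    refine mul_right_cancel₀ hqt ?_
    linear_combination (Polynomial.eval t Q) * h1
  -- Hence A = 0.
  have hA0 : A = 0 := by
    by_contra hAne
    set B : Polynomial ℂ := A.comp (Polynomial.X ^ 2) * Q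
        - Polynomial.C 2 * A * Q.comp (Polynomial.X ^ 2) with hB
    have hB0 : B = 0 := by
      by_contra hBne
      have hinf : {x : ℂ | Polynomial.IsRoot B x}.Infinite := by
        apply Set.Infinite.mono (s := {x : ℂ | x ≠ 0})
        · intro x hx
          simp only [Set.mem_setOf_eq, Polynomial.IsRoot.def, hB,
            Polynomial.eval_sub, Polynomial.eval_mul, Polynomial.eval_comp,
            Polynomial.eval_pow, Polynomial.eval_X, Polynomial.eval_C]
          have := hsq x hx
          linear_combination this
        · have : ({0}ᶜ : Set ℂ) = {x : ℂ | x ≠ 0} := by ext x; simp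
          rw [← this]
          exact Set.Finite.infinite_compl (Set.finite_singleton 0)
      exact hBne (Polynomial.eq_zero_of_infinite_isRoot B hinf)
    have heq : A.comp (Polynomial.X ^ 2) * Q
        = Polynomial.C 2 * A * Q.comp (Polynomial.X ^ 2) := by
      have := sub_eq_zero.mp (hB ▸ hB0)
      exact this
    have hQne' : Q ≠ 0 := fun h => hQ1 (by rw [h, Polynomial.eval_zero])
    have hdeg : ((Polynomial.X : Polynomial ℂ) ^ 2).natDegree ≠ 0 := by
      simp [Polynomial.natDegree_X_pow]
    have hlc := congrArg Polynomial.leadingCoeff heq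
    rw [Polynomial.leadingCoeff_mul, Polynomial.leadingCoeff_comp hdeg,
      Polynomial.leadingCoeff_mul, Polynomial.leadingCoeff_mul,
      Polynomial.leadingCoeff_comp hdeg] at hlc
    simp only [Polynomial.leadingCoeff_X_pow, one_pow, mul_one,
      Polynomial.leadingCoeff_C] at hlc
    have hAlc : A.leadingCoeff ≠ 0 := Polynomial.leadingCoeff_ne_zero.mpr hAne
    have hQlc : Q.leadingCoeff ≠ 0 := Polynomial.leadingCoeff_ne_zero.mpr hQne'
    have hzero : A.leadingCoeff * Q.leadingCoeff = 0 := by linear_combination -hlc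
    rcases mul_eq_zero.mp hzero with h | h
    · exact hAlc h
    · exact hQlc h
  -- Conclude.
  intro t ht v hv
  have hAev : Polynomial.eval t A = 0 := by rw [hA0, Polynomial.eval_zero]
  simp only [hA, Polynomial.eval_sub, Polynomial.eval_mul, Polynomial.eval_C] at hAev
  have hφ : eval (t • v₀) p / eval (t • v₀) q - eval v₀ p / eval v₀ q = 0 := by
    have e3 : eval (t • v₀) p = Polynomial.eval t P := (heval p t).symm
    have e4 : eval (t • v₀) q = Polynomial.eval t Q := (heval q t).symm
    have e5 : eval v₀ p = Polynomial.eval 1 P := by rw [heval p 1, one_smul]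
    have e6 : eval v₀ q = Polynomial.eval 1 Q := by rw [heval q 1, one_smul]
    rw [e3, e4, e5, e6]
    have hqt : Polynomial.eval t Q ≠ 0 := hQne t ht
    field_simp
    linear_combination hAev
  have := key t ht v hv
  rw [hφ] at this
  exact sub_eq_zero.mp this
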